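/- Let f(x) = √((1+x)/2) and for n ≥ 1 let B_n = f∘f∘⋯∘f denote its n-fold iterate, defined on (−1, ∞). Then for every n ≥ 1, every integer k ≥ 1, and every x ∈ (−1, ∞), the k-th derivative B_n^{(k)}(x) exists, is nonzero, and has sign (−1)^{k+1}. Consequently, setting C_n(x) = 2^n · B_n'(x), for every k ≥ 1 and x ∈ (−1, ∞), the k-th derivative C_n^{(k)}(x) is nonzero with sign (−1)^k. -/

import Mathlib

open Set Filter Topology

namespace Stmt7

noncomputable def f : ℝ → ℝ := fun y => Real.sqrt ((1 + y) / 2)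

local notation "S" => Set.Ioi (-1 : ℝ)

lemma hSu : UniqueDiffOn ℝ S := isOpen_Ioi.uniqueDiffOn

lemma one_add_pos {x : ℝ} (hx : x ∈ S) : 0 < 1 + x := by
  have : -1 < x := hx; linarith

lemma f_pos {x : ℝ} (hx : x ∈ S) : 0 < f x :=
  Real.sqrt_pos.2 (by have := one_add_pos hx; linarith)

lemma f_maps : MapsTo f S S := fun x hx => lt_trans (by norm_num) (f_pos hx)

lemma f_smooth (m : ℕ) : ContDiffOn ℝ m f S := by
  intro x hx
  have h1 : ContDiffAt ℝ m (fun y : ℝ => (1 + y) / 2) x :=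
    ((contDiffAt_const.add contDiffAt_id)).div_const 2
  have hpos : (0:ℝ) < (1 + x) / 2 := by have := one_add_pos hx; linarith
  exact ((Real.contDiffAt_sqrt hpos.ne').comp x h1).contDiffWithinAt

noncomputable def c : ℕ → ℝ
  | 0 => (Real.sqrt 2)⁻¹
  | (k+1) => c k * (1/2 - k)

lemma c_succ (k : ℕ) : c (k+1) = c k * (1/2 - k) := rfl

lemma c_zero_pos : 0 < c 0 := by
  have : (0:ℝ) < Real.sqrt 2 := Real.sqrt_pos.2 (by norm_num)
  exact inv_pos.2 this

lemma c_sign : ∀ k, 0 < (-1:ℝ)^k * c (k+1) := by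
  intro k
  induction k with
  | zero =>
    rw [c_succ]
    simp only [pow_zero, one_mul, Nat.cast_zero, sub_zero]
    have := c_zero_pos
    nlinarith
  | succ k IH =>
    rw [c_succ (k+1)]
    have hB : ((k:ℝ) + 1) - 1/2 > 0 := by
      have : (0:ℝ) ≤ (k:ℝ) := Nat.cast_nonneg k
      linarith
    have := mul_pos IH hB
    rw [pow_succ]
    push_cast
    nlinarith [this]

lemma f_iter (k : ℕ) : ∀ x ∈ S, iteratedDerivWithin k f S x = c k * (1 + x) ^ ((1:ℝ)/2 - k) := by
  induction k with
  | zero =>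
    intro x hx
    rw [iteratedDerivWithin_zero]
    have h0 : (0:ℝ) ≤ 1 + x := (one_add_pos hx).le
    show Real.sqrt ((1+x)/2) = _
    rw [Real.sqrt_div h0 2, Real.sqrt_eq_rpow,
      show ((1:ℝ)/2 - (0:ℕ)) = 1/(2:ℝ) by norm_num, show c 0 = (Real.sqrt 2)⁻¹ from rfl]
    ring
  | succ k IH =>
    intro x hx
    have hu := hSu x hx
    rw [iteratedDerivWithin_succ]
    rw [derivWithin_congr (fun y hy => IH y hy) (IH x hx)]
    have hpos := one_add_pos hx
    have h1 : HasDerivAt (fun y : ℝ => 1 + y) 1 x := (hasDerivAt_id x).const_add 1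
    have hd : HasDerivAt (fun y : ℝ => c k * (1 + y) ^ ((1:ℝ)/2 - k))
        (c k * (1 * ((1:ℝ)/2 - k) * (1 + x) ^ ((1:ℝ)/2 - k - 1))) x :=
      (h1.rpow_const (Or.inl hpos.ne')).const_mul (c k)
    rw [hd.hasDerivWithinAt.derivWithin hu]
    rw [c_succ]
    rw [show ((1:ℝ)/2 - ((k:ℕ)+1:ℕ)) = (1:ℝ)/2 - (k:ℝ) - 1 by push_cast; ring]
    ring

lemma f_sign (k : ℕ) (hk : 1 ≤ k) {x : ℝ} (hx : x ∈ S) :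
    0 < (-1:ℝ)^(k+1) * iteratedDerivWithin k f S x := by
  obtain _ | m := k
  · omega
  · rw [f_iter (m+1) x hx]
    have h1 := c_sign m
    have h2 : 0 < (1+x) ^ ((1:ℝ)/2 - ((m:ℕ)+1:ℕ)) := Real.rpow_pos_of_pos (one_add_pos hx) _
    have h3 : (-1:ℝ)^(m+1+1) = (-1:ℝ)^m := by
      rw [show m+1+1 = m+2 by ring, pow_add]; norm_num
    rw [h3]
    calc (0:ℝ) < ((-1)^m * c (m+1)) * (1+x) ^ ((1:ℝ)/2 - ((m:ℕ)+1:ℕ)) := mul_pos h1 h2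
    _ = (-1)^m * (c (m+1) * (1+x) ^ ((1:ℝ)/2 - ((m:ℕ)+1:ℕ))) := by ring

lemma cast_lt_succ (k : ℕ) : (k : WithTop ℕ∞) < ((k+1 : ℕ) : WithTop ℕ∞) := by
  exact_mod_cast Nat.lt_succ_self k

lemma diffOn {u : ℝ → ℝ} (hu : ∀ m : ℕ, ContDiffOn ℝ m u S) (k : ℕ) :
    DifferentiableOn ℝ (iteratedDerivWithin k u S) S :=
  (hu (k+1)).differentiableOn_iteratedDerivWithin (cast_lt_succ k) hSu

lemma diffOn' {u : ℝ → ℝ} (hu : ∀ m : ℕ, ContDiffOn ℝ m u S) : DifferentiableOn ℝ u S :=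
  (hu 1).differentiableOn (by norm_cast)

lemma derivWithin_smooth {u : ℝ → ℝ} (hu : ∀ m : ℕ, ContDiffOn ℝ m u S) (m : ℕ) :
    ContDiffOn ℝ m (derivWithin u S) S :=
  (hu (m+1)).derivWithin hSu (by exact_mod_cast le_refl (m+1))

lemma prod_sign : ∀ (k : ℕ) (w v : ℝ → ℝ), (∀ m : ℕ, ContDiffOn ℝ m w S) →
    (∀ m : ℕ, ContDiffOn ℝ m v S) →
    (∀ j ≤ k, ∀ x ∈ S, 0 < (-1:ℝ)^j * iteratedDerivWithin j w S x) →
    (∀ j ≤ k, ∀ x ∈ S, 0 < (-1:ℝ)^j * iteratedDerivWithin j v S x) →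
    ∀ x ∈ S, 0 < (-1:ℝ)^k * iteratedDerivWithin k (fun y => w y * v y) S x := by
  intro k
  induction k with
  | zero =>
    intro w v _ _ hw hv x hx
    have h1 := hw 0 le_rfl x hx
    have h2 := hv 0 le_rfl x hx
    simp only [iteratedDerivWithin_zero, pow_zero, one_mul] at h1 h2 ⊢
    exact mul_pos h1 h2
  | succ k IH =>
    intro w v hws hvs hw hv x hx
    set W : ℝ → ℝ := fun y => -derivWithin w S y with hW
    set V : ℝ → ℝ := fun y => -derivWithin v S y with hV
    have hWs : ∀ m : ℕ, ContDiffOn ℝ m W S := fun m => (derivWithin_smooth hws m).neg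
    have hVs : ∀ m : ℕ, ContDiffOn ℝ m V S := fun m => (derivWithin_smooth hvs m).neg
    have hWsign : ∀ j ≤ k, ∀ y ∈ S, 0 < (-1:ℝ)^j * iteratedDerivWithin j W S y := by
      intro j hj y hy
      have h1 : iteratedDerivWithin j W S y = -iteratedDerivWithin (j+1) w S y := by
        rw [hW, iteratedDerivWithin_fun_neg, ← iteratedDerivWithin_succ']
      rw [h1]
      have h2 := hw (j+1) (by omega) y hy
      rw [pow_succ] at h2
      nlinarith [h2]
    have hVsign : ∀ j ≤ k, ∀ y ∈ S, 0 < (-1:ℝ)^j * iteratedDerivWithin j V S y := by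
      intro j hj y hy
      have h1 : iteratedDerivWithin j V S y = -iteratedDerivWithin (j+1) v S y := by
        rw [hV, iteratedDerivWithin_fun_neg, ← iteratedDerivWithin_succ']
      rw [h1]
      have h2 := hv (j+1) (by omega) y hy
      rw [pow_succ] at h2
      nlinarith [h2]
    have hEq : Set.EqOn (derivWithin (fun y => w y * v y) S)
        ((fun y => -(W y * v y)) + (fun y => -(w y * V y))) S := by
      intro y hy
      rw [derivWithin_fun_mul (diffOn' hws y hy) (diffOn' hvs y hy)]
      simp only [hW, hV, Pi.add_apply]
      ring
    have hA := IH W v hWs hvs hWsign (fun j hj y hy => hv j (by omega) y hy) x hx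
    have hB := IH w V hws hVs (fun j hj y hy => hw j (by omega) y hy) hVsign x hx
    rw [iteratedDerivWithin_succ', iteratedDerivWithin_congr hEq hx,
      iteratedDerivWithin_add hx hSu (((hWs k).mul (hvs k)).neg x hx) (((hws k).mul (hVs k)).neg x hx),
      iteratedDerivWithin_fun_neg, iteratedDerivWithin_fun_neg, pow_succ]
    nlinarith [hA, hB]

lemma comp_sign (h : ℝ → ℝ) (hhs : ∀ m : ℕ, ContDiffOn ℝ m h S) (hmaps : MapsTo h S S)
    (hhsign : ∀ j, 1 ≤ j → ∀ x ∈ S, 0 < (-1:ℝ)^(j+1) * iteratedDerivWithin j h S x) :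
    ∀ (k : ℕ) (c : ℝ → ℝ), (∀ m : ℕ, ContDiffOn ℝ m c S) →
    (∀ j ≤ k, ∀ x ∈ S, 0 < (-1:ℝ)^j * iteratedDerivWithin j c S x) →
    ∀ j ≤ k, ∀ x ∈ S, 0 < (-1:ℝ)^j * iteratedDerivWithin j (fun y => c (h y)) S x := by
  intro k
  induction k with
  | zero =>
    intro c hcs hcsign j hj x hx
    obtain rfl : j = 0 := by omega
    have := hcsign 0 le_rfl (h x) (hmaps hx)
    simpa using this
  | succ k IH =>
    intro c hcs hcsign j hj x hx
    rcases Nat.lt_succ_iff_lt_or_eq.1 (Nat.lt_succ_of_le hj) with hjk | rfl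
    · exact IH c hcs (fun i hi y hy => hcsign i (by omega) y hy) j (by omega) x hx
    · set c₁ : ℝ → ℝ := fun z => -derivWithin c S z with hc₁
      set h₁ : ℝ → ℝ := fun y => derivWithin h S y with hh₁
      have hc₁s : ∀ m : ℕ, ContDiffOn ℝ m c₁ S := fun m => (derivWithin_smooth hcs m).neg
      have hh₁s : ∀ m : ℕ, ContDiffOn ℝ m h₁ S := fun m => derivWithin_smooth hhs m
      have hcomp_s : ∀ m : ℕ, ContDiffOn ℝ m (fun y => c₁ (h y)) S := by
        intro m
        have H := ContDiffOn.comp (hc₁s m) (hhs m) hmaps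
        exact H
      have hEq : Set.EqOn (derivWithin (fun y => c (h y)) S)
          (fun y => -(c₁ (h y) * h₁ y)) S := by
        intro y hy
        have hcd : DifferentiableWithinAt ℝ c S (h y) := diffOn' hcs (h y) (hmaps hy)
        have hhd : DifferentiableWithinAt ℝ h S y := diffOn' hhs y hy
        have := derivWithin_comp y hcd hhd hmaps
        simp only [Function.comp_def] at this
        rw [this]
        simp only [hc₁, hh₁]
        ring
      have hc₁sign : ∀ i ≤ k, ∀ y ∈ S, 0 < (-1:ℝ)^i * iteratedDerivWithin i c₁ S y := by
        intro i hi y hy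
        have h1 : iteratedDerivWithin i c₁ S y = -iteratedDerivWithin (i+1) c S y := by
          rw [hc₁, iteratedDerivWithin_fun_neg, ← iteratedDerivWithin_succ']
        rw [h1]
        have h2 := hcsign (i+1) (by omega) y hy
        rw [pow_succ] at h2
        nlinarith [h2]
      have hh₁sign : ∀ i ≤ k, ∀ y ∈ S, 0 < (-1:ℝ)^i * iteratedDerivWithin i h₁ S y := by
        intro i hi y hy
        have h1 : iteratedDerivWithin i h₁ S y = iteratedDerivWithin (i+1) h S y := by
          rw [hh₁, ← iteratedDerivWithin_succ']
        rw [h1]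
        have h2 := hhsign (i+1) (by omega) y hy
        rw [show i+1+1 = i+2 by ring, pow_add] at h2
        nlinarith [h2]
      have hw := IH c₁ hc₁s hc₁sign
      have hP := prod_sign k (fun y => c₁ (h y)) h₁ hcomp_s hh₁s hw hh₁sign x hx
      rw [iteratedDerivWithin_succ', iteratedDerivWithin_congr hEq hx,
        iteratedDerivWithin_fun_neg, pow_succ]
      nlinarith [hP]

def Good (g : ℝ → ℝ) : Prop :=
  (∀ m : ℕ, ContDiffOn ℝ m g S) ∧ MapsTo g S S ∧
    ∀ k, 1 ≤ k → ∀ x ∈ S, 0 < (-1:ℝ)^(k+1) * iteratedDerivWithin k g S x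

lemma good_f : Good f :=
  ⟨f_smooth, f_maps, fun k hk x hx => f_sign k hk hx⟩

lemma good_comp {h : ℝ → ℝ} (hg : Good h) : Good (fun y => f (h y)) := by
  obtain ⟨hhs, hmaps, hhsign⟩ := hg
  refine ⟨?_, fun x hx => f_maps (hmaps hx), ?_⟩
  · intro m
    have H := ContDiffOn.comp (f_smooth m) (hhs m) hmaps
    exact H
  intro k hk x hx
  obtain _ | m := k
  · omega
  set f₁ : ℝ → ℝ := fun z => derivWithin f S z with hf₁
  set h₁ : ℝ → ℝ := fun y => derivWithin h S y with hh₁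
  have hf₁s : ∀ m : ℕ, ContDiffOn ℝ m f₁ S := fun m => derivWithin_smooth f_smooth m
  have hh₁s : ∀ m : ℕ, ContDiffOn ℝ m h₁ S := fun m => derivWithin_smooth hhs m
  have hcomp_s : ∀ m : ℕ, ContDiffOn ℝ m (fun y => f₁ (h y)) S := by
    intro m
    have H := ContDiffOn.comp (hf₁s m) (hhs m) hmaps
    exact H
  have hEq : Set.EqOn (derivWithin (fun y => f (h y)) S)
      (fun y => f₁ (h y) * h₁ y) S := by
    intro y hy
    have hcd : DifferentiableWithinAt ℝ f S (h y) := diffOn' f_smooth (h y) (hmaps hy)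
    have hhd : DifferentiableWithinAt ℝ h S y := diffOn' hhs y hy
    have := derivWithin_comp y hcd hhd hmaps
    simp only [Function.comp_def] at this
    rw [this]
  have hf₁sign : ∀ i ≤ m, ∀ y ∈ S, 0 < (-1:ℝ)^i * iteratedDerivWithin i f₁ S y := by
    intro i hi y hy
    have h1 : iteratedDerivWithin i f₁ S y = iteratedDerivWithin (i+1) f S y := by
      rw [hf₁, ← iteratedDerivWithin_succ']
    rw [h1]
    have h2 := f_sign (i+1) (by omega) hy
    rw [show i+1+1 = i+2 by ring, pow_add] at h2
    nlinarith [h2]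
  have hh₁sign : ∀ i ≤ m, ∀ y ∈ S, 0 < (-1:ℝ)^i * iteratedDerivWithin i h₁ S y := by
    intro i hi y hy
    have h1 : iteratedDerivWithin i h₁ S y = iteratedDerivWithin (i+1) h S y := by
      rw [hh₁, ← iteratedDerivWithin_succ']
    rw [h1]
    have h2 := hhsign (i+1) (by omega) y hy
    rw [show i+1+1 = i+2 by ring, pow_add] at h2
    nlinarith [h2]
  have hw := comp_sign h hhs hmaps hhsign m f₁ hf₁s hf₁sign
  have hP := prod_sign m (fun y => f₁ (h y)) h₁ hcomp_s hh₁s hw hh₁sign x hx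
  rw [iteratedDerivWithin_succ', iteratedDerivWithin_congr hEq hx,
    show m+1+1 = m+2 by ring, pow_add]
  nlinarith [hP]

lemma good_iter : ∀ n, 1 ≤ n → Good (f^[n]) := by
  intro n hn
  induction n with
  | zero => omega
  | succ n IH =>
    obtain _ | n := n
    · simpa [Function.iterate_one] using good_f
    · have h1 : Good (f^[n+1]) := IH (by omega)
      have h2 : f^[n+1+1] = fun y => f (f^[n+1] y) := by
        funext y; exact Function.iterate_succ_apply' f (n+1) y
      rw [h2]
      exact good_comp h1

lemma idw_eq_id (k : ℕ) (u : ℝ → ℝ) {x : ℝ} (hx : x ∈ S) :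
    iteratedDerivWithin k u S x = iteratedDeriv k u x := by
  rw [iteratedDerivWithin_eq_iteratedFDerivWithin, iteratedDeriv_eq_iteratedFDeriv,
    iteratedFDerivWithin_of_isOpen k isOpen_Ioi hx]

end Stmt7

open Stmt7 in
/-- Let `f(x) = √((1+x)/2)` and `B_n = f^{∘n}` (n ≥ 1). For every `k ≥ 1`
and `x ∈ (−1, ∞)`, the `k`-th derivative `B_n⁽ᵏ⁾(x)` is nonzero with sign `(−1)^{k+1}`;
consequently, with `C_n(x) = 2^n · B_n'(x)`, the `k`-th derivative `C_n⁽ᵏ⁾(x)` is nonzero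
with sign `(−1)^k`. -/
theorem stmt_7 (n k : ℕ) (hn : 1 ≤ n) (hk : 1 ≤ k) (x : ℝ) (hx : -1 < x) :
    0 < (-1 : ℝ) ^ (k + 1) *
        iteratedDeriv k ((fun y => Real.sqrt ((1 + y) / 2))^[n]) x ∧
    0 < (-1 : ℝ) ^ k *
        iteratedDeriv k
          (fun y => (2 : ℝ) ^ n * deriv ((fun z => Real.sqrt ((1 + z) / 2))^[n]) y) x := by
  have hxS : x ∈ Set.Ioi (-1 : ℝ) := hx
  obtain ⟨hgs, hgm, hgsign⟩ := good_iter n hn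
  constructor
  · have := hgsign k hk x hxS
    rwa [idw_eq_id k _ hxS] at this
  · have hgiter : ∀ m : ℕ, ContDiffOn ℝ m (f^[n]) (Set.Ioi (-1:ℝ)) := hgs
    have hEq : Set.EqOn (fun y => (2 : ℝ) ^ n * deriv (f^[n]) y)
        (fun y => (2 : ℝ) ^ n * derivWithin (f^[n]) (Set.Ioi (-1:ℝ)) y) (Set.Ioi (-1:ℝ)) := by
      intro y hy
      simp only [derivWithin_of_isOpen isOpen_Ioi hy]
    have h1 : iteratedDeriv k (fun y => (2 : ℝ) ^ n * deriv (f^[n]) y) x =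
        iteratedDeriv k (fun y => (2 : ℝ) ^ n * derivWithin (f^[n]) (Set.Ioi (-1:ℝ)) y) x :=
      hEq.iteratedDeriv_of_isOpen isOpen_Ioi k hxS
    have h2 : iteratedDeriv k (fun y => (2 : ℝ) ^ n * derivWithin (f^[n]) (Set.Ioi (-1:ℝ)) y) x =
        iteratedDerivWithin k (fun y => (2 : ℝ) ^ n * derivWithin (f^[n]) (Set.Ioi (-1:ℝ)) y)
          (Set.Ioi (-1:ℝ)) x := (idw_eq_id k _ hxS).symm
    have h3 : iteratedDerivWithin k
          (fun y => (2 : ℝ) ^ n * derivWithin (f^[n]) (Set.Ioi (-1:ℝ)) y) (Set.Ioi (-1:ℝ)) x =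
        (2 : ℝ) ^ n * iteratedDerivWithin k (derivWithin (f^[n]) (Set.Ioi (-1:ℝ)))
          (Set.Ioi (-1:ℝ)) x :=
      iteratedDerivWithin_const_mul hxS hSu ((2:ℝ)^n) ((derivWithin_smooth hgiter k) x hxS)
    have h4 : iteratedDerivWithin k (derivWithin (f^[n]) (Set.Ioi (-1:ℝ))) (Set.Ioi (-1:ℝ)) x =
        iteratedDerivWithin (k+1) (f^[n]) (Set.Ioi (-1:ℝ)) x :=
      (congrFun iteratedDerivWithin_succ' x).symm
    have hsig := hgsign (k+1) (by omega) x hxS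
    rw [show k+1+1 = k+2 by ring, pow_add] at hsig
    have h2n : (0:ℝ) < 2^n := by positivity
    rw [show (fun z => Real.sqrt ((1 + z) / 2)) = f from rfl]
    rw [h1, h2, h3, h4]
    nlinarith [mul_pos h2n hsig]
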